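/- A probability mass function can be recovered from its exponential generating function via the Laguerre inversion: p[m] = ∫_0^∞ e^{-s}·H̃(-s)·L_m(s) ds. -/

import Mathlib

/-- The `n`-th Laguerre polynomial as a real function. -/
noncomputable def laguerre (n : ℕ) (x : ℝ) : ℝ :=
  ∑ k ∈ Finset.range (n + 1), (n.choose k : ℝ) * (-x) ^ k / (Nat.factorial k : ℝ)

/-- Exponential generating function of the scaled falling moments of a pmf `p`. -/
noncomputable def egf (p : ℕ → ℝ) (t : ℝ) : ℝ :=
  ∑' m : ℕ, t ^ m / (Nat.factorial m : ℝ) * (∑' n : ℕ, (n.choose m : ℝ) * p n)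


open Finset

lemma alt_sum (N : ℕ) : ∑ i ∈ Finset.range (N+1), (-1:ℝ)^i * (N.choose i : ℝ)
    = if N = 0 then 1 else 0 := by
  have h := Int.alternating_sum_range_choose (n := N)
  have h2 := congrArg (fun z : ℤ => (z : ℝ)) h
  push_cast at h2
  simpa using h2

lemma lemB (n m : ℕ) : ∑ j ∈ Finset.range (n+1), (-1:ℝ)^j * (n.choose j : ℝ) * (j.choose m : ℝ)
    = (-1)^n * (if n = m then 1 else 0) := by
  by_cases h : m ≤ n
  · have hsub : ∑ j ∈ Finset.range (n+1), (-1:ℝ)^j * (n.choose j : ℝ) * (j.choose m : ℝ)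
        = ∑ j ∈ Finset.Ico m (n+1), (-1:ℝ)^j * (n.choose j : ℝ) * (j.choose m : ℝ) := by
      rw [Finset.range_eq_Ico]
      refine (Finset.sum_subset (Finset.Ico_subset_Ico (Nat.zero_le m) le_rfl) ?_).symm
      intro j hj hj2
      simp only [Finset.mem_Ico] at hj hj2
      have : j < m := by omega
      rw [Nat.choose_eq_zero_of_lt this]
      simp
    rw [hsub, Finset.sum_Ico_eq_sum_range]
    have hstep : ∀ i ∈ Finset.range (n + 1 - m),
        (-1:ℝ)^(m+i) * ((n.choose (m+i) : ℝ)) * (((m+i).choose m : ℝ))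
        = ((-1:ℝ)^m * (n.choose m : ℝ)) * ((-1:ℝ)^i * ((n-m).choose i : ℝ)) := by
      intro i hi
      simp only [Finset.mem_range] at hi
      have h1 : m + i ≤ n := by omega
      have h2 : m ≤ m + i := Nat.le_add_right m i
      have := Nat.choose_mul (n := n) h2
      have hc : ((n.choose (m+i) : ℝ)) * (((m+i).choose m : ℝ)) = (n.choose m : ℝ) * (((n-m).choose (m+i-m) : ℝ)) := by
        exact_mod_cast congrArg (fun z : ℕ => (z : ℝ)) this
      have hmi : m + i - m = i := by omega
      rw [hmi] at hc
      rw [pow_add]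
      linear_combination ((-1:ℝ)^m * (-1:ℝ)^i) * hc
    rw [Finset.sum_congr rfl hstep, ← Finset.mul_sum]
    have hnm : n + 1 - m = (n - m) + 1 := by omega
    rw [hnm, alt_sum (n-m)]
    by_cases hnm2 : n = m
    · subst hnm2; simp
    · have : n - m ≠ 0 := by omega
      simp [this, hnm2]
  · have : ∀ j ∈ Finset.range (n+1), (-1:ℝ)^j * (n.choose j : ℝ) * (j.choose m : ℝ) = 0 := by
      intro j hj
      simp only [Finset.mem_range] at hj
      have : j < m := by omega
      rw [Nat.choose_eq_zero_of_lt this]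
      simp
    rw [Finset.sum_eq_zero this]
    have : n ≠ m := by omega
    simp [this]

lemma lemV (j k : ℕ) : (((j+k).choose j : ℕ) : ℝ)
    = ∑ b ∈ Finset.range (j+1), (j.choose b : ℝ) * (k.choose b : ℝ) := by
  have h := Nat.add_choose_eq j k j
  rw [Finset.Nat.sum_antidiagonal_eq_sum_range_succ_mk] at h
  have h2 : ∑ a ∈ Finset.range (j+1), j.choose a * k.choose (j - a)
      = ∑ b ∈ Finset.range (j+1), j.choose b * k.choose b := by
    rw [← Finset.sum_range_reflect]
    refine Finset.sum_congr rfl ?_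
    intro b hb
    simp only [Finset.mem_range] at hb
    have hb' : b ≤ j := by omega
    have e1 : j + 1 - 1 - b = j - b := by omega
    rw [e1, Nat.choose_symm hb', Nat.sub_sub_self hb']
  rw [h2] at h
  exact_mod_cast congrArg (fun z : ℕ => (z : ℝ)) h

lemma lemA (j m : ℕ) : ∑ k ∈ Finset.range (m+1), (-1:ℝ)^k * (m.choose k : ℝ) * ((j+k).choose j : ℝ)
    = (-1)^m * (j.choose m : ℝ) := by
  have hV : ∀ k, ((j+k).choose j : ℝ) = ∑ b ∈ Finset.range (j+1), (j.choose b : ℝ) * (k.choose b : ℝ) :=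
    fun k => lemV j k
  calc ∑ k ∈ Finset.range (m+1), (-1:ℝ)^k * (m.choose k : ℝ) * ((j+k).choose j : ℝ)
      = ∑ k ∈ Finset.range (m+1), ∑ b ∈ Finset.range (j+1),
          (j.choose b : ℝ) * ((-1:ℝ)^k * (m.choose k : ℝ) * (k.choose b : ℝ)) := by
        refine Finset.sum_congr rfl fun k _ => ?_
        rw [hV k, Finset.mul_sum]
        refine Finset.sum_congr rfl fun b _ => by ring
    _ = ∑ b ∈ Finset.range (j+1), (j.choose b : ℝ) *
          ∑ k ∈ Finset.range (m+1), (-1:ℝ)^k * (m.choose k : ℝ) * (k.choose b : ℝ) := by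
        rw [Finset.sum_comm]
        exact Finset.sum_congr rfl fun b _ => (Finset.mul_sum _ _ _).symm
    _ = ∑ b ∈ Finset.range (j+1), (j.choose b : ℝ) * ((-1:ℝ)^m * (if m = b then 1 else 0)) := by
        exact Finset.sum_congr rfl fun b _ => by rw [lemB m b]
    _ = (-1)^m * (j.choose m : ℝ) := by
        by_cases hm : m ∈ Finset.range (j+1)
        · rw [Finset.sum_eq_single m]
          · simp [mul_comm]
          · intro b _ hb; simp [Ne.symm hb]
          · intro h; exact absurd hm h
        · rw [Finset.sum_eq_zero]
          · simp only [Finset.mem_range, not_lt] at hm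
            have : j < m := by omega
            rw [Nat.choose_eq_zero_of_lt this]; simp
          · intro b hb
            have : m ≠ b := by
              intro h; subst h; exact hm hb
            simp [this]

open MeasureTheory Real Set


lemma integrableOn_exp_pow (k : ℕ) :
    IntegrableOn (fun s : ℝ => Real.exp (-s) * s ^ k) (Set.Ioi 0) := by
  have h := Real.GammaIntegral_convergent (s := (k:ℝ)+1) (by positivity)
  simp only [add_sub_cancel_right] at h
  refine h.congr_fun ?_ measurableSet_Ioi
  intro x _
  simp [Real.rpow_natCast]

lemma integral_exp_pow (k : ℕ) :
    ∫ s in Set.Ioi (0:ℝ), Real.exp (-s) * s ^ k = (k.factorial : ℝ) := by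
  have h := Real.Gamma_eq_integral (s := (k:ℝ)+1) (by positivity)
  rw [Real.Gamma_nat_eq_factorial] at h
  simp only [add_sub_cancel_right] at h
  rw [h]
  refine setIntegral_congr_fun measurableSet_Ioi ?_
  intro x _
  simp [Real.rpow_natCast]

lemma lag_expand (n m : ℕ) (s : ℝ) :
    Real.exp (-s) * laguerre n s * laguerre m s
    = ∑ j ∈ Finset.range (n+1), ∑ k ∈ Finset.range (m+1),
        ((n.choose j : ℝ) * (-1)^j / (Nat.factorial j : ℝ))
          * ((m.choose k : ℝ) * (-1)^k / (Nat.factorial k : ℝ))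
          * (Real.exp (-s) * s ^ (j+k)) := by
  unfold laguerre
  rw [mul_assoc, Finset.sum_mul_sum, Finset.mul_sum]
  refine Finset.sum_congr rfl fun j _ => ?_
  rw [Finset.mul_sum]
  refine Finset.sum_congr rfl fun k _ => ?_
  rw [pow_add]
  simp only [neg_pow s]
  ring

lemma lag_orth (n m : ℕ) :
    ∫ s in Set.Ioi (0:ℝ), Real.exp (-s) * laguerre n s * laguerre m s
    = if n = m then 1 else 0 := by
  have hrw : (fun s : ℝ => Real.exp (-s) * laguerre n s * laguerre m s)
      = fun s => ∑ j ∈ Finset.range (n+1), ∑ k ∈ Finset.range (m+1),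
        ((n.choose j : ℝ) * (-1)^j / (Nat.factorial j : ℝ))
          * ((m.choose k : ℝ) * (-1)^k / (Nat.factorial k : ℝ))
          * (Real.exp (-s) * s ^ (j+k)) := funext (lag_expand n m)
  rw [hrw]
  rw [integral_finset_sum _ (fun j _ => integrable_finset_sum _ (fun k _ =>
    ((integrableOn_exp_pow (j+k)).const_mul _)))]
  have hjk : ∀ j ∈ Finset.range (n+1), ∀ k ∈ Finset.range (m+1), True := fun _ _ _ _ => trivial
  have step1 : ∀ j ∈ Finset.range (n+1),
      (∫ s in Set.Ioi (0:ℝ), ∑ k ∈ Finset.range (m+1),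
        ((n.choose j : ℝ) * (-1)^j / (Nat.factorial j : ℝ))
          * ((m.choose k : ℝ) * (-1)^k / (Nat.factorial k : ℝ))
          * (Real.exp (-s) * s ^ (j+k)))
      = (-1:ℝ)^j * (n.choose j : ℝ) * ((-1)^m * (j.choose m : ℝ)) := by
    intro j _
    rw [integral_finset_sum _ (fun k _ => ((integrableOn_exp_pow (j+k)).const_mul _))]
    have step2 : ∀ k ∈ Finset.range (m+1),
        (∫ s in Set.Ioi (0:ℝ),
          ((n.choose j : ℝ) * (-1)^j / (Nat.factorial j : ℝ))
            * ((m.choose k : ℝ) * (-1)^k / (Nat.factorial k : ℝ))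
            * (Real.exp (-s) * s ^ (j+k)))
        = ((-1:ℝ)^j * (n.choose j : ℝ)) * ((-1:ℝ)^k * (m.choose k : ℝ) * (((j+k).choose j : ℕ) : ℝ)) := by
      intro k _
      rw [integral_const_mul, integral_exp_pow]
      have hfac := Nat.choose_mul_factorial_mul_factorial (Nat.le_add_right j k)
      simp only [Nat.add_sub_cancel_left] at hfac
      have hfacR : (((j+k).choose j : ℕ) : ℝ) * (Nat.factorial j : ℝ) * (Nat.factorial k : ℝ)
          = ((j+k).factorial : ℝ) := by exact_mod_cast congrArg (fun z : ℕ => (z : ℝ)) hfac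
      have hj0 : (Nat.factorial j : ℝ) ≠ 0 := Nat.cast_ne_zero.mpr (Nat.factorial_ne_zero j)
      have hk0 : (Nat.factorial k : ℝ) ≠ 0 := Nat.cast_ne_zero.mpr (Nat.factorial_ne_zero k)
      rw [← hfacR]
      field_simp
    rw [Finset.sum_congr rfl step2, ← Finset.mul_sum]
    rw [lemA j m]
  rw [Finset.sum_congr rfl step1]
  have hsum : ∑ j ∈ Finset.range (n+1),
      (-1:ℝ)^j * (n.choose j : ℝ) * ((-1)^m * (j.choose m : ℝ))
      = (-1:ℝ)^m * ((-1:ℝ)^n * (if n = m then 1 else 0)) := by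
    rw [← lemB n m, Finset.mul_sum]
    exact Finset.sum_congr rfl fun j _ => by ring
  rw [hsum]
  by_cases h : n = m
  · subst h
    rw [if_pos rfl, mul_one, ← pow_add, Even.neg_one_pow ⟨n, rfl⟩]
  · simp [h]

lemma integrable_exp_lag (n m : ℕ) :
    MeasureTheory.IntegrableOn
      (fun s : ℝ => Real.exp (-s) * laguerre n s * laguerre m s) (Set.Ioi 0) := by
  have h : (fun s : ℝ => Real.exp (-s) * laguerre n s * laguerre m s)
      = fun s => ∑ j ∈ Finset.range (n+1), ∑ k ∈ Finset.range (m+1),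
        ((n.choose j : ℝ) * (-1)^j / (Nat.factorial j : ℝ))
          * ((m.choose k : ℝ) * (-1)^k / (Nat.factorial k : ℝ))
          * (Real.exp (-s) * s ^ (j+k)) := funext (lag_expand n m)
  rw [h]
  exact MeasureTheory.integrable_finset_sum _ (fun j _ =>
    MeasureTheory.integrable_finset_sum _ (fun k _ =>
      (integrableOn_exp_pow (j+k)).const_mul _))

lemma int_abs_le (n m : ℕ) :
    ∫ s in Set.Ioi (0:ℝ), |Real.exp (-s) * laguerre n s * laguerre m s| ≤ 1 := by
  have key : ∀ s : ℝ, |Real.exp (-s) * laguerre n s * laguerre m s| ≤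
      (Real.exp (-s) * laguerre n s * laguerre n s
        + Real.exp (-s) * laguerre m s * laguerre m s) / 2 := by
    intro s
    have he : (0:ℝ) < Real.exp (-s) := Real.exp_pos _
    have h1 := two_mul_le_add_sq |laguerre n s| |laguerre m s|
    rw [sq_abs, sq_abs] at h1
    have h2 : |Real.exp (-s) * laguerre n s * laguerre m s|
        = Real.exp (-s) * (|laguerre n s| * |laguerre m s|) := by
      rw [abs_mul, abs_mul, abs_of_pos he]; ring
    rw [h2]
    have h3 := mul_le_mul_of_nonneg_left h1 he.le
    nlinarith [h3]
  have hInt : MeasureTheory.Integrable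
      (fun s => |Real.exp (-s) * laguerre n s * laguerre m s|)
      (MeasureTheory.volume.restrict (Set.Ioi 0)) := (integrable_exp_lag n m).abs
  have hIntR : MeasureTheory.Integrable
      (fun s => (Real.exp (-s) * laguerre n s * laguerre n s
        + Real.exp (-s) * laguerre m s * laguerre m s) / 2)
      (MeasureTheory.volume.restrict (Set.Ioi 0)) :=
    ((integrable_exp_lag n n).add (integrable_exp_lag m m)).div_const 2
  calc ∫ s in Set.Ioi (0:ℝ), |Real.exp (-s) * laguerre n s * laguerre m s|
      ≤ ∫ s in Set.Ioi (0:ℝ), (Real.exp (-s) * laguerre n s * laguerre n s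
        + Real.exp (-s) * laguerre m s * laguerre m s) / 2 :=
        MeasureTheory.integral_mono hInt hIntR key
    _ = 1 := by
        rw [MeasureTheory.integral_div,
          MeasureTheory.integral_add (integrable_exp_lag n n) (integrable_exp_lag m m),
          lag_orth n n, lag_orth m m]
        norm_num

lemma egf_eq (p : ℕ → ℝ) (hp0 : ∀ n, 0 ≤ p n)
    (hconv : ∀ m, Summable fun n : ℕ => (n.choose m : ℝ) * p n)
    (hconv2 : ∀ t : ℝ, t ≤ 0 → Summable fun m : ℕ =>
      |t ^ m / (Nat.factorial m : ℝ) * (∑' n : ℕ, (n.choose m : ℝ) * p n)|)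
    (s : ℝ) (hs : 0 ≤ s) :
    egf p (-s) = ∑' n, p n * laguerre n s := by
  classical
  set F : ℕ → ℕ → ℝ := fun k n => (-s)^k / (Nat.factorial k : ℝ) * ((n.choose k : ℝ) * p n)
    with hF
  have hc0 : ∀ k, 0 ≤ ∑' n, (n.choose k : ℝ) * p n :=
    fun k => tsum_nonneg (fun n => mul_nonneg (Nat.cast_nonneg _) (hp0 n))
  have habs : Summable (fun q : ℕ × ℕ => |F q.1 q.2|) := by
    refine (summable_prod_of_nonneg (fun q => abs_nonneg _)).mpr ⟨fun k => ?_, ?_⟩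
    · have h : (fun n => |F k n|)
          = fun n => |(-s)^k / (Nat.factorial k : ℝ)| * ((n.choose k : ℝ) * p n) := by
        funext n
        rw [hF, abs_mul, abs_of_nonneg (mul_nonneg (Nat.cast_nonneg _) (hp0 n))]
      rw [h]
      exact (hconv k).mul_left _
    · have h : (fun k => ∑' n, |F k n|)
          = fun k => |(-s)^k / (Nat.factorial k : ℝ) * (∑' n, (n.choose k : ℝ) * p n)| := by
        funext k
        have h1 : (fun n => |F k n|)
            = fun n => |(-s)^k / (Nat.factorial k : ℝ)| * ((n.choose k : ℝ) * p n) := by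
          funext n
          rw [hF, abs_mul, abs_of_nonneg (mul_nonneg (Nat.cast_nonneg _) (hp0 n))]
        rw [h1, tsum_mul_left, abs_mul, abs_of_nonneg (hc0 k)]
      rw [h]
      exact hconv2 (-s) (neg_nonpos.mpr hs)
  have hsumF : Summable (Function.uncurry F) := by
    apply Summable.of_abs
    exact habs
  have h1 : egf p (-s) = ∑' k, ∑' n, F k n := by
    unfold egf
    exact tsum_congr fun k => (tsum_mul_left).symm
  have h2 : ∑' (k) (n), F k n = ∑' (n) (k), F k n := (Summable.tsum_comm hsumF).symm
  have h3 : ∀ n, ∑' k, F k n = p n * laguerre n s := by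
    intro n
    have hz : ∀ k ∉ Finset.range (n+1), F k n = 0 := by
      intro k hk
      simp only [Finset.mem_range, not_lt] at hk
      have hlt : n < k := hk
      simp [hF, Nat.choose_eq_zero_of_lt hlt]
    rw [tsum_eq_sum hz]
    unfold laguerre
    rw [Finset.mul_sum]
    exact Finset.sum_congr rfl fun k _ => by rw [hF]; ring
  rw [h1, h2]
  exact tsum_congr h3


theorem laguerre_inversion (p : ℕ → ℝ)
    (hp0 : ∀ n, 0 ≤ p n) (hp1 : ∑' n, p n = 1)
    (hconv : ∀ m, Summable fun n : ℕ => (n.choose m : ℝ) * p n)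
    (hconv2 : ∀ t : ℝ, t ≤ 0 → Summable fun m : ℕ =>
      |t ^ m / (Nat.factorial m : ℝ) * (∑' n : ℕ, (n.choose m : ℝ) * p n)|)
    (m : ℕ) :
    p m = ∫ s in Set.Ioi (0 : ℝ), Real.exp (-s) * egf p (-s) * laguerre m s := by
  classical
  have hsp : Summable p := by simpa using hconv 0
  set f : ℕ → ℝ → ℝ := fun n s => p n * (Real.exp (-s) * laguerre n s * laguerre m s) with hf
  have hintg : ∀ n, MeasureTheory.Integrable (f n)
      (MeasureTheory.volume.restrict (Set.Ioi 0)) :=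
    fun n => (integrable_exp_lag n m).const_mul _
  have hcongr : (∫ s in Set.Ioi (0:ℝ), Real.exp (-s) * egf p (-s) * laguerre m s)
      = ∫ s in Set.Ioi (0:ℝ), ∑' n, f n s := by
    refine MeasureTheory.setIntegral_congr_fun measurableSet_Ioi ?_
    intro s hs
    have hs' : (0:ℝ) ≤ s := le_of_lt hs
    simp only
    rw [egf_eq p hp0 hconv hconv2 s hs']
    have e1 : ∀ n : ℕ, f n s = (p n * laguerre n s) * (Real.exp (-s) * laguerre m s) :=
      fun n => by rw [hf]; ring
    rw [tsum_congr e1, tsum_mul_right]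
    ring
  have hbound : ∀ n, (∫ s in Set.Ioi (0:ℝ), ‖f n s‖) ≤ p n := by
    intro n
    have e1 : (fun s => ‖f n s‖)
        = fun s => p n * |Real.exp (-s) * laguerre n s * laguerre m s| := by
      funext s
      rw [hf, Real.norm_eq_abs, abs_mul, abs_of_nonneg (hp0 n)]
    rw [e1, MeasureTheory.integral_const_mul]
    calc p n * ∫ s in Set.Ioi (0:ℝ), |Real.exp (-s) * laguerre n s * laguerre m s|
        ≤ p n * 1 := mul_le_mul_of_nonneg_left (int_abs_le n m) (hp0 n)
      _ = p n := mul_one _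
  have hlint : ∑' n, ∫⁻ s, ‖f n s‖₊ ∂(MeasureTheory.volume.restrict (Set.Ioi 0)) ≠ ⊤ := by
    have e2 : ∀ n, ∫⁻ s, ‖f n s‖₊ ∂(MeasureTheory.volume.restrict (Set.Ioi 0))
        = ENNReal.ofReal (∫ s in Set.Ioi (0:ℝ), ‖f n s‖) :=
      fun n => (MeasureTheory.ofReal_integral_norm_eq_lintegral_enorm (hintg n)).symm
    have hle : ∑' n, ∫⁻ s, ‖f n s‖₊ ∂(MeasureTheory.volume.restrict (Set.Ioi 0))
        ≤ ∑' n, ENNReal.ofReal (p n) := by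
      refine ENNReal.tsum_le_tsum fun n => ?_
      rw [e2 n]
      exact ENNReal.ofReal_le_ofReal (hbound n)
    refine ne_top_of_le_ne_top ?_ hle
    rw [← ENNReal.ofReal_tsum_of_nonneg hp0 hsp, hp1]
    exact ENNReal.ofReal_ne_top
  rw [hcongr, MeasureTheory.integral_tsum (fun n => (hintg n).aestronglyMeasurable) hlint]
  have hval : ∀ n, (∫ s in Set.Ioi (0:ℝ), f n s) = if n = m then p m else 0 := by
    intro n
    rw [hf]
    simp only
    rw [MeasureTheory.integral_const_mul, lag_orth n m]
    by_cases h : n = m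
    · subst h; simp
    · simp [h]
  rw [tsum_congr hval]
  exact (tsum_ite_eq m (fun _ => p m)).symm
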